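/- Let X be the shift matrix and Z the clock matrix on ℂ^{ℤ/dℤ}, and let e_a (a ∈ ℤ/dℤ) be the standard basis. For integers x with 0 ≤ x ≤ (d−1)/2 and i ∈ ℤ/dℤ define v^x_i ∈ ℂ^{ℤ/dℤ} ⊗ ℂ^{ℤ/dℤ} by v^0_i = e_i ⊗ e_i and, for x ≠ 0, v^x_i = (1/√2)(e_{i−2^{−1}x} ⊗ e_{i+2^{−1}x} + e_{i+2^{−1}x} ⊗ e_{i−2^{−1}x}); for 1 ≤ x ≤ (d−1)/2 define w^x_i = (1/√2)(e_{i−2^{−1}x} ⊗ e_{i+2^{−1}x} − e_{i+2^{−1}x} ⊗ e_{i−2^{−1}x}). Then the vectors {v^x_i} ∪ {w^x_i} form an orthonormal basis of ℂ^{ℤ/dℤ} ⊗ ℂ^{ℤ/dℤ}, and the operators 𝐗 = X ⊗ X and 𝐙 = Z^{(d+1)/2} ⊗ Z^{(d+1)/2} act blockwise as the standard clock and shift: 𝐗 v^x_i = v^x_{i+1}, 𝐙 v^x_i = ω^i·v^x_i, 𝐗 w^x_i = w^x_{i+1}, and 𝐙 w^x_i = ω^i·w^x_i. In particular each span{v^x_i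 : i ∈ ℤ/dℤ} and span{w^x_i : i ∈ ℤ/dℤ} is a d-dimensional invariant subspace carrying the standard Weyl representation. -/

import Mathlib

open Matrix Complex Kronecker

/-- `ω = exp(2πi/d)`. -/
noncomputable def omg (d : ℕ) : ℂ := Complex.exp (2 * Real.pi * Complex.I / d)

/-- The shift matrix `X`, `(X)_{r,s} = δ_{r,s+1}`. -/
noncomputable def shiftX (d : ℕ) [NeZero d] : Matrix (ZMod d) (ZMod d) ℂ :=
  Matrix.of fun r s => if r = s + 1 then 1 else 0

/-- The clock matrix `Z`, `(Z)_{r,s} = ω^r δ_{r,s}`. -/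
noncomputable def clockZ (d : ℕ) [NeZero d] : Matrix (ZMod d) (ZMod d) ℂ :=
  Matrix.of fun r s => if r = s then omg d ^ r.val else 0

/-- The standard Hermitian inner product `⟨x, y⟩`, antilinear in the first slot. -/
noncomputable def cInner {n : Type*} [Fintype n] (x y : n → ℂ) : ℂ :=
  ∑ k, star (x k) * y k

/-- The symmetric basis vectors `v^x_i`: `v^0_i = e_i ⊗ e_i` and, for `x ≠ 0`,
`v^x_i = (1/√2)(e_{i-2⁻¹x} ⊗ e_{i+2⁻¹x} + e_{i+2⁻¹x} ⊗ e_{i-2⁻¹x})`. -/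
noncomputable def symV (d : ℕ) [NeZero d] (x : ℕ) (i : ZMod d) :
    ZMod d × ZMod d → ℂ :=
  if x = 0 then
    fun p => (if p.1 = i then 1 else 0) * (if p.2 = i then 1 else 0)
  else
    fun p => (1 / Real.sqrt 2 : ℂ) *
      ((if p.1 = i - (2 : ZMod d)⁻¹ * (x : ZMod d) then 1 else 0) *
        (if p.2 = i + (2 : ZMod d)⁻¹ * (x : ZMod d) then 1 else 0)
      + (if p.1 = i + (2 : ZMod d)⁻¹ * (x : ZMod d) then 1 else 0) *
        (if p.2 = i - (2 : ZMod d)⁻¹ * (x : ZMod d) then 1 else 0))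

/-- The antisymmetric basis vectors
`w^x_i = (1/√2)(e_{i-2⁻¹x} ⊗ e_{i+2⁻¹x} - e_{i+2⁻¹x} ⊗ e_{i-2⁻¹x})`. -/
noncomputable def antiV (d : ℕ) [NeZero d] (x : ℕ) (i : ZMod d) :
    ZMod d × ZMod d → ℂ :=
  fun p => (1 / Real.sqrt 2 : ℂ) *
    ((if p.1 = i - (2 : ZMod d)⁻¹ * (x : ZMod d) then 1 else 0) *
        (if p.2 = i + (2 : ZMod d)⁻¹ * (x : ZMod d) then 1 else 0)
      - (if p.1 = i + (2 : ZMod d)⁻¹ * (x : ZMod d) then 1 else 0) *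
        (if p.2 = i - (2 : ZMod d)⁻¹ * (x : ZMod d) then 1 else 0))

namespace DWRD
variable {d : ℕ} [NeZero d]

noncomputable def E (d : ℕ) [NeZero d] (a b : ZMod d) : ZMod d × ZMod d → ℂ :=
  fun p => (if p.1 = a then 1 else 0) * (if p.2 = b then 1 else 0)

lemma star_E (a b : ZMod d) (k : ZMod d × ZMod d) : star (E d a b k) = E d a b k := by
  simp [E, apply_ite (star : ℂ → ℂ)]

lemma cInner_E (a b a' b' : ZMod d) :
    cInner (E d a b) (E d a' b') = if a = a' ∧ b = b' then 1 else 0 := by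
  simp only [cInner, star_E]
  rw [Fintype.sum_prod_type]
  simp only [E]
  have : ∀ k1 k2 : ZMod d,
      ((if k1 = a then (1:ℂ) else 0) * (if k2 = b then 1 else 0)) *
        ((if k1 = a' then (1:ℂ) else 0) * (if k2 = b' then 1 else 0))
      = (if k1 = a then (if k1 = a' then (1:ℂ) else 0) * (if k2 = b then (1:ℂ) else 0) * (if k2 = b' then 1 else 0) else 0) := by
    intro k1 k2
    by_cases h : k1 = a <;> by_cases h2 : k2 = b <;> by_cases h3 : k1 = a' <;>
      by_cases h4 : k2 = b' <;> simp [h, h2, h3, h4] <;> split_ifs <;> simp_all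
  simp only [this, Finset.sum_ite_eq', Finset.mem_univ, if_true]
  by_cases h : a = a' <;> by_cases h2 : b = b' <;> simp [h, h2, Finset.sum_ite_eq', ite_and, eq_comm]

lemma cInner_add_right {n : Type*} [Fintype n] (x y z : n → ℂ) :
    cInner x (y + z) = cInner x y + cInner x z := by
  simp [cInner, mul_add, Finset.sum_add_distrib]

lemma cInner_sub_right {n : Type*} [Fintype n] (x y z : n → ℂ) :
    cInner x (y - z) = cInner x y - cInner x z := by
  simp [cInner, mul_sub, Finset.sum_sub_distrib]

lemma cInner_smul_right {n : Type*} [Fintype n] (r : ℂ) (x y : n → ℂ) :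
    cInner x (r • y) = r * cInner x y := by
  simp [cInner, Finset.mul_sum]; apply Finset.sum_congr rfl; intros; ring

lemma cInner_add_left {n : Type*} [Fintype n] (x y z : n → ℂ) :
    cInner (x + y) z = cInner x z + cInner y z := by
  simp [cInner, add_mul, Finset.sum_add_distrib]

lemma cInner_sub_left {n : Type*} [Fintype n] (x y z : n → ℂ) :
    cInner (x - y) z = cInner x z - cInner y z := by
  simp [cInner, sub_mul, Finset.sum_sub_distrib]

lemma cInner_smul_left {n : Type*} [Fintype n] (r : ℂ) (x y : n → ℂ) :
    cInner (r • x) y = star r * cInner x y := by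
  simp [cInner, Finset.mul_sum]; apply Finset.sum_congr rfl; intros; ring

lemma cInner_conj {n : Type*} [Fintype n] (x y : n → ℂ) :
    cInner x y = star (cInner y x) := by
  simp [cInner]; apply Finset.sum_congr rfl; intros; ring

-- the real coefficient
noncomputable def rt2 : ℂ := (1 / Real.sqrt 2 : ℂ)

lemma star_rt2 : star rt2 = rt2 := by
  simp [rt2, Complex.star_def]

lemma rt2_mul_rt2 : rt2 * rt2 = 1 / 2 := by
  rw [rt2, div_mul_div_comm, one_mul, ← Complex.ofReal_mul,
    Real.mul_self_sqrt (by norm_num)]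
  norm_num

lemma symV_zero (i : ZMod d) : symV d 0 i = E d i i := by
  funext p; simp [symV, E]

lemma symV_pos {x : ℕ} (hx : x ≠ 0) (i : ZMod d) :
    symV d x i = rt2 • (E d (i - (2 : ZMod d)⁻¹ * x) (i + (2 : ZMod d)⁻¹ * x)
      + E d (i + (2 : ZMod d)⁻¹ * x) (i - (2 : ZMod d)⁻¹ * x)) := by
  funext p; simp [symV, E, hx, rt2, mul_add]

lemma antiV_eq (x : ℕ) (i : ZMod d) :
    antiV d x i = rt2 • (E d (i - (2 : ZMod d)⁻¹ * x) (i + (2 : ZMod d)⁻¹ * x)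
      - E d (i + (2 : ZMod d)⁻¹ * x) (i - (2 : ZMod d)⁻¹ * x)) := by
  funext p; simp [antiV, E, rt2, mul_sub]

lemma omg_pow_d : omg d ^ d = 1 := by
  rw [omg, ← Complex.exp_nat_mul]
  have hd : (d : ℂ) ≠ 0 := Nat.cast_ne_zero.mpr (NeZero.ne d)
  rw [mul_div_cancel₀ _ hd, Complex.exp_two_pi_mul_I]

lemma omg_pow_eq {m n : ℕ} (h : (m : ZMod d) = n) : omg d ^ m = omg d ^ n := by
  have hmod : m % d = n % d := by
    have := (ZMod.natCast_eq_natCast_iff m n d).mp h; exact this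
  have key : ∀ k : ℕ, omg d ^ k = omg d ^ (k % d) := by
    intro k
    conv_lhs => rw [← Nat.div_add_mod k d]
    rw [pow_add, pow_mul, omg_pow_d, one_pow, one_mul]
  rw [key m, key n, hmod]

section odd
variable (hodd : Odd d)
include hodd

lemma two_mul_inv : (2 : ZMod d) * (2 : ZMod d)⁻¹ = 1 := by
  apply ZMod.mul_inv_of_unit
  rw [show ((2 : ZMod d)) = ((2 : ℕ) : ZMod d) by push_cast; ring]
  rw [ZMod.isUnit_iff_coprime]
  exact Nat.coprime_two_left.mpr hodd

lemma inv_two_mul (u : ZMod d) : (2 : ZMod d)⁻¹ * (2 * u) = u := by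
  rw [← mul_assoc, mul_comm (2 : ZMod d)⁻¹ 2, two_mul_inv hodd, one_mul]

lemma two_inv_cancel (u : ZMod d) : 2 * ((2 : ZMod d)⁻¹ * u) = u := by
  rw [← mul_assoc, two_mul_inv hodd, one_mul]

lemma half {u v : ZMod d} (h : 2 * u = 2 * v) : u = v := by
  have := congrArg (fun t => (2 : ZMod d)⁻¹ * t) h
  simpa [inv_two_mul hodd] using this

lemma eq_pair_iff {x x' : ℕ} (hx : x < d) (hx' : x' < d) {i i' : ZMod d} :
    (i - (2:ZMod d)⁻¹ * x = i' - (2:ZMod d)⁻¹ * x' ∧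
      i + (2:ZMod d)⁻¹ * x = i' + (2:ZMod d)⁻¹ * x') ↔ (x = x' ∧ i = i') := by
  constructor
  · rintro ⟨h1, h2⟩
    have hi : i = i' := by
      apply half hodd
      have := congrArg₂ (· + ·) h1 h2
      simpa [two_mul] using by linear_combination h1 + h2
    subst hi
    have hc : (2:ZMod d)⁻¹ * x = (2:ZMod d)⁻¹ * x' := by linear_combination h2
    have hxx : (x : ZMod d) = (x' : ZMod d) := by
      have := congrArg (fun t => (2 : ZMod d) * t) hc
      simpa [two_inv_cancel hodd] using this
    refine ⟨?_, rfl⟩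
    have := congrArg ZMod.val hxx
    rwa [ZMod.val_cast_of_lt hx, ZMod.val_cast_of_lt hx'] at this
  · rintro ⟨rfl, rfl⟩; exact ⟨rfl, rfl⟩

lemma cross_ne {x x' : ℕ} (hx0 : 0 < x + x') (hxx : x + x' < d) {i i' : ZMod d}
    (h1 : i - (2:ZMod d)⁻¹ * x = i' + (2:ZMod d)⁻¹ * x')
    (h2 : i + (2:ZMod d)⁻¹ * x = i' - (2:ZMod d)⁻¹ * x') : False := by
  have hi : i = i' := by
    apply half hodd; linear_combination h1 + h2
  subst hi
  have hc : (2:ZMod d)⁻¹ * x + (2:ZMod d)⁻¹ * x' = 0 := by linear_combination h2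
  have h0 : ((x + x' : ℕ) : ZMod d) = 0 := by
    have := congrArg (fun t => (2 : ZMod d) * t) hc
    push_cast
    simpa [mul_add, two_inv_cancel hodd] using this
  rw [ZMod.natCast_eq_zero_iff] at h0
  obtain ⟨k, hk⟩ := h0
  rcases k with _ | k <;> simp_all <;> nlinarith

lemma self_ne {x : ℕ} (hx0 : 0 < x) (hxd : x < d) (i : ZMod d) :
    i - (2:ZMod d)⁻¹ * x ≠ i + (2:ZMod d)⁻¹ * x := by
  intro h
  have hc : (2:ZMod d) * ((2:ZMod d)⁻¹ * x) = 0 := by linear_combination -h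
  rw [two_inv_cancel hodd] at hc
  rw [ZMod.natCast_eq_zero_iff] at hc
  have := Nat.le_of_dvd hx0 hc
  omega

end odd

section odd2
variable (hodd : Odd d)
include hodd

lemma cInner_symV_symV {x x' : ℕ} (hx : 2 * x < d) (hx' : 2 * x' < d) (i i' : ZMod d) :
    cInner (symV d x i) (symV d x' i') = if x = x' ∧ i = i' then 1 else 0 := by
  rcases Nat.eq_zero_or_pos x with hx0 | hx0 <;> rcases Nat.eq_zero_or_pos x' with hx0' | hx0'
  · subst hx0; subst hx0'
    rw [symV_zero, symV_zero, cInner_E]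
    simp [and_self]
  · subst hx0
    rw [symV_zero, symV_pos (by omega) i', cInner_smul_right, cInner_add_right,
      cInner_E, cInner_E]
    have hne := self_ne hodd hx0' (by omega) i'
    have e1 : (i = i' - (2:ZMod d)⁻¹ * x' ∧ i = i' + (2:ZMod d)⁻¹ * x') ↔ False := by
      constructor
      · rintro ⟨h1, h2⟩; exact hne (h1 ▸ h2 ▸ rfl)
      · exact False.elim
    have e2 : (i = i' + (2:ZMod d)⁻¹ * x' ∧ i = i' - (2:ZMod d)⁻¹ * x') ↔ False := by
      rw [and_comm]; exact e1
    simp only [e1, e2]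
    have hno : ¬ (0 = x' ∧ i = i') := by rintro ⟨h1, -⟩; omega
    simp [hno]
  · subst hx0'
    rw [symV_zero, symV_pos (by omega) i, cInner_smul_left, star_rt2, cInner_add_left,
      cInner_E, cInner_E]
    have hne := self_ne hodd hx0 (by omega) i
    have e1 : (i - (2:ZMod d)⁻¹ * x = i' ∧ i + (2:ZMod d)⁻¹ * x = i') ↔ False := by
      constructor
      · rintro ⟨h1, h2⟩; exact hne (h1.trans h2.symm)
      · exact False.elim
    have e2 : (i + (2:ZMod d)⁻¹ * x = i' ∧ i - (2:ZMod d)⁻¹ * x = i') ↔ False := by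
      rw [and_comm]; exact e1
    simp only [e1, e2]
    have hno : ¬ (x = 0 ∧ i = i') := by rintro ⟨h1, -⟩; omega
    simp [hno]
  · set c := (2:ZMod d)⁻¹ * x with hc
    set c' := (2:ZMod d)⁻¹ * x' with hc'
    rw [symV_pos (by omega) i, symV_pos (by omega) i', cInner_smul_left, star_rt2,
      cInner_smul_right, cInner_add_left, cInner_add_right, cInner_add_right,
      cInner_E, cInner_E, cInner_E, cInner_E]
    have e1 : (i - c = i' - c' ∧ i + c = i' + c') ↔ (x = x' ∧ i = i') :=
      eq_pair_iff hodd (by omega) (by omega)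
    have e2 : (i - c = i' + c' ∧ i + c = i' - c') ↔ False :=
      ⟨fun h => cross_ne hodd (by omega) (by omega) h.1 h.2, False.elim⟩
    have e3 : (i + c = i' - c' ∧ i - c = i' + c') ↔ False := by rw [and_comm]; exact e2
    have e4 : (i + c = i' + c' ∧ i - c = i' - c') ↔ (x = x' ∧ i = i') := by
      rw [and_comm]; exact e1
    rw [← hc, ← hc']
    simp only [e1, e2, e3, e4]
    by_cases h : x = x' ∧ i = i' <;> simp only [h, if_true, if_false, iff_false,
      not_false_iff, if_neg (fun hf : False => hf), iff_true] <;> simp [h]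
    linear_combination (2:ℂ) * rt2_mul_rt2

lemma cInner_antiV_antiV {x x' : ℕ} (hx0 : 0 < x) (hx : 2 * x < d)
    (hx0' : 0 < x') (hx' : 2 * x' < d) (i i' : ZMod d) :
    cInner (antiV d x i) (antiV d x' i') = if x = x' ∧ i = i' then 1 else 0 := by
  set c := (2:ZMod d)⁻¹ * x with hc
  set c' := (2:ZMod d)⁻¹ * x' with hc'
  rw [antiV_eq, antiV_eq, cInner_smul_left, star_rt2,
    cInner_smul_right, cInner_sub_left, cInner_sub_right, cInner_sub_right,
    cInner_E, cInner_E, cInner_E, cInner_E]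
  have e1 : (i - c = i' - c' ∧ i + c = i' + c') ↔ (x = x' ∧ i = i') :=
    eq_pair_iff hodd (by omega) (by omega)
  have e2 : (i - c = i' + c' ∧ i + c = i' - c') ↔ False :=
    ⟨fun h => cross_ne hodd (by omega) (by omega) h.1 h.2, False.elim⟩
  have e3 : (i + c = i' - c' ∧ i - c = i' + c') ↔ False := by rw [and_comm]; exact e2
  have e4 : (i + c = i' + c' ∧ i - c = i' - c') ↔ (x = x' ∧ i = i') := by
    rw [and_comm]; exact e1
  rw [← hc, ← hc']
  simp only [e1, e2, e3, e4]
  by_cases h : x = x' ∧ i = i' <;> simp [h]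
  linear_combination (2:ℂ) * rt2_mul_rt2

lemma cInner_symV_antiV (x x' : ℕ) (i i' : ZMod d) :
    cInner (symV d x i) (antiV d x' i') = 0 := by
  set c := (2:ZMod d)⁻¹ * x with hc
  set c' := (2:ZMod d)⁻¹ * x' with hc'
  rcases Nat.eq_zero_or_pos x with hx0 | hx0
  · subst hx0
    rw [symV_zero, antiV_eq, cInner_smul_right, cInner_sub_right, cInner_E, cInner_E]
    rw [← hc']
    simp only [show (i = i' + c' ∧ i = i' - c') ↔ (i = i' - c' ∧ i = i' + c') from and_comm]
    ring
  · rw [symV_pos (by omega) i, antiV_eq, cInner_smul_left, star_rt2, cInner_smul_right,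
      cInner_sub_right, cInner_add_left, cInner_add_left,
      cInner_E, cInner_E, cInner_E, cInner_E]
    rw [← hc, ← hc']
    simp only [show (i + c = i' - c' ∧ i - c = i' + c') ↔ (i - c = i' + c' ∧ i + c = i' - c') from and_comm,
      show (i + c = i' + c' ∧ i - c = i' - c') ↔ (i - c = i' - c' ∧ i + c = i' + c') from and_comm]
    ring

lemma cInner_antiV_symV (x x' : ℕ) (i i' : ZMod d) :
    cInner (antiV d x i) (symV d x' i') = 0 := by
  rw [cInner_conj, cInner_symV_antiV hodd, star_zero]

end odd2

lemma shiftX_kron_E (a b : ZMod d) :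
    (shiftX d ⊗ₖ shiftX d).mulVec (E d a b) = E d (a + 1) (b + 1) := by
  funext p
  simp only [mulVec, dotProduct, kroneckerMap_apply, shiftX, of_apply, E]
  rw [Fintype.sum_prod_type]
  have key : ∀ q1 q2 : ZMod d,
      (if p.1 = q1 + 1 then (1:ℂ) else 0) * (if p.2 = q2 + 1 then (1:ℂ) else 0) *
        ((if q1 = a then (1:ℂ) else 0) * (if q2 = b then 1 else 0))
      = if q2 = b then (if q1 = a then
          (if p.1 = a + 1 then (1:ℂ) else 0) * (if p.2 = b + 1 then 1 else 0) else 0) else 0 := by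
    intro q1 q2
    by_cases h1 : q1 = a <;> by_cases h2 : q2 = b <;> simp [h1, h2]
  simp only [key, Finset.sum_ite_eq', Finset.mem_univ, if_true]

lemma clockZ_diag : clockZ d = Matrix.diagonal (fun r : ZMod d => omg d ^ r.val) := by
  funext r s
  by_cases h : r = s <;> simp [clockZ, Matrix.diagonal, h]

lemma clock_kron_E (m : ℕ) (a b : ZMod d) :
    ((clockZ d ^ m) ⊗ₖ (clockZ d ^ m)).mulVec (E d a b)
      = (omg d ^ (m * a.val) * omg d ^ (m * b.val)) • E d a b := by
  rw [clockZ_diag, Matrix.diagonal_pow]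
  funext p
  simp only [mulVec, dotProduct, kroneckerMap_apply, Matrix.diagonal, of_apply, E,
    Pi.smul_apply, Pi.pow_apply, smul_eq_mul]
  rw [Fintype.sum_prod_type]
  have key : ∀ q1 q2 : ZMod d,
      (if p.1 = q1 then (omg d ^ p.1.val) ^ m else 0) * (if p.2 = q2 then (omg d ^ p.2.val) ^ m else 0) *
        ((if q1 = a then (1:ℂ) else 0) * (if q2 = b then 1 else 0))
      = if q2 = b then (if q1 = a then
          (omg d ^ (m * a.val) * omg d ^ (m * b.val)) *
            ((if p.1 = a then (1:ℂ) else 0) * (if p.2 = b then 1 else 0)) else 0) else 0 := by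
    intro q1 q2
    by_cases h1 : q1 = a <;> by_cases h2 : q2 = b <;>
      by_cases h3 : p.1 = a <;> by_cases h4 : p.2 = b <;>
        simp [h1, h2, h3, h4, ← pow_mul, mul_comm]
  simp only [key, Finset.sum_ite_eq', Finset.mem_univ, if_true]

lemma key_coeff (hodd : Odd d) {a b i : ZMod d} (hab : a + b = 2 * i) :
    omg d ^ ((d + 1) / 2 * a.val) * omg d ^ ((d + 1) / 2 * b.val) = omg d ^ i.val := by
  rw [← pow_add]
  apply omg_pow_eq
  have h2m : ((2 * ((d + 1) / 2) : ℕ) : ZMod d) = 1 := by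
    obtain ⟨k, hk⟩ := hodd
    have : 2 * ((d + 1) / 2) = d + 1 := by omega
    rw [this]
    push_cast [ZMod.natCast_self]
    ring
  push_cast [ZMod.natCast_val, ZMod.cast_id] at h2m ⊢
  linear_combination (((d + 1) / 2 : ℕ) : ZMod d) * hab + i * h2m

lemma shift_symV (x : ℕ) (i : ZMod d) :
    (shiftX d ⊗ₖ shiftX d).mulVec (symV d x i) = symV d x (i + 1) := by
  rcases Nat.eq_zero_or_pos x with hx0 | hx0
  · subst hx0; rw [symV_zero, symV_zero, shiftX_kron_E]
  · rw [symV_pos (by omega) i, symV_pos (by omega) (i + 1), Matrix.mulVec_smul,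
      Matrix.mulVec_add, shiftX_kron_E, shiftX_kron_E]
    congr 2 <;> ring_nf

lemma shift_antiV (x : ℕ) (i : ZMod d) :
    (shiftX d ⊗ₖ shiftX d).mulVec (antiV d x i) = antiV d x (i + 1) := by
  rw [antiV_eq, antiV_eq, Matrix.mulVec_smul, Matrix.mulVec_sub, shiftX_kron_E,
    shiftX_kron_E]
  congr 2 <;> ring_nf

lemma clock_symV (hodd : Odd d) (x : ℕ) (i : ZMod d) :
    ((clockZ d ^ ((d + 1) / 2)) ⊗ₖ (clockZ d ^ ((d + 1) / 2))).mulVec (symV d x i)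
      = omg d ^ i.val • symV d x i := by
  rcases Nat.eq_zero_or_pos x with hx0 | hx0
  · subst hx0
    rw [symV_zero, clock_kron_E, key_coeff hodd (by ring)]
  · rw [symV_pos (by omega) i, Matrix.mulVec_smul, Matrix.mulVec_add,
      clock_kron_E, clock_kron_E,
      key_coeff hodd (by ring : (i - (2:ZMod d)⁻¹ * x) + (i + (2:ZMod d)⁻¹ * x) = 2 * i),
      key_coeff hodd (by ring : (i + (2:ZMod d)⁻¹ * x) + (i - (2:ZMod d)⁻¹ * x) = 2 * i)]
    rw [← smul_add, smul_comm]

lemma clock_antiV (hodd : Odd d) (x : ℕ) (i : ZMod d) :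
    ((clockZ d ^ ((d + 1) / 2)) ⊗ₖ (clockZ d ^ ((d + 1) / 2))).mulVec (antiV d x i)
      = omg d ^ i.val • antiV d x i := by
  rw [antiV_eq, Matrix.mulVec_smul, Matrix.mulVec_sub, clock_kron_E, clock_kron_E,
    key_coeff hodd (by ring : (i - (2:ZMod d)⁻¹ * x) + (i + (2:ZMod d)⁻¹ * x) = 2 * i),
    key_coeff hodd (by ring : (i + (2:ZMod d)⁻¹ * x) + (i - (2:ZMod d)⁻¹ * x) = 2 * i)]
  rw [← smul_sub, smul_comm]

lemma cInner_zero_right {n : Type*} [Fintype n] (x : n → ℂ) : cInner x 0 = 0 := by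
  simp [cInner]

lemma li_of_orthonormal {ι : Type*} [Fintype ι] [DecidableEq ι] {m : Type*} [Fintype m] (f : ι → m → ℂ)
    (h : ∀ t t', cInner (f t) (f t') = if t = t' then 1 else 0) :
    LinearIndependent ℂ f := by
  rw [Fintype.linearIndependent_iff]
  intro g hg t
  have expand : cInner (f t) (∑ j, g j • f j) = ∑ j, g j * cInner (f t) (f j) := by
    simp only [cInner, Finset.sum_apply, Pi.smul_apply, smul_eq_mul, Finset.mul_sum]
    rw [Finset.sum_comm]
    refine Finset.sum_congr rfl fun j _ => Finset.sum_congr rfl fun k _ => by ring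
  rw [hg, cInner_zero_right] at expand
  simp only [h, mul_ite, mul_one, mul_zero, Finset.sum_ite_eq, Finset.mem_univ,
    if_true] at expand
  exact expand.symm

end DWRD

open DWRD in
/-- The vectors `{v^x_i} ∪ {w^x_i}` form an orthonormal basis of
`ℂ^{ℤ/dℤ} ⊗ ℂ^{ℤ/dℤ}`, on which `𝐗 = X ⊗ X` and `𝐙 = Z^{(d+1)/2} ⊗ Z^{(d+1)/2}`
act blockwise as the standard shift and clock, so that each
`span{v^x_i : i}` and `span{w^x_i : i}` is a `d`-dimensional invariant subspace
carrying the standard Weyl representation. -/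
theorem doubled_weyl_rep_decomposition
    (d : ℕ) [NeZero d] (hodd : Odd d) (hd : 3 ≤ d) :
    -- orthonormal basis, indexed by the disjoint union of the two label sets
    (∀ t t' : (Fin ((d - 1) / 2 + 1) × ZMod d) ⊕ (Fin ((d - 1) / 2) × ZMod d),
      cInner
        (Sum.elim (fun q => symV d q.1.val q.2) (fun q => antiV d (q.1.val + 1) q.2) t)
        (Sum.elim (fun q => symV d q.1.val q.2) (fun q => antiV d (q.1.val + 1) q.2) t')
      = if t = t' then 1 else 0) ∧
    (Submodule.span ℂ (Set.range
        (Sum.elim (fun q : Fin ((d - 1) / 2 + 1) × ZMod d => symV d q.1.val q.2)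
          (fun q : Fin ((d - 1) / 2) × ZMod d => antiV d (q.1.val + 1) q.2)))
      = (⊤ : Submodule ℂ (ZMod d × ZMod d → ℂ))) ∧
    -- blockwise action of 𝐗 and 𝐙
    (∀ x : ℕ, x ≤ (d - 1) / 2 → ∀ i : ZMod d,
      (shiftX d ⊗ₖ shiftX d).mulVec (symV d x i) = symV d x (i + 1) ∧
      ((clockZ d ^ ((d + 1) / 2)) ⊗ₖ (clockZ d ^ ((d + 1) / 2))).mulVec (symV d x i)
        = omg d ^ i.val • symV d x i) ∧
    (∀ x : ℕ, 1 ≤ x → x ≤ (d - 1) / 2 → ∀ i : ZMod d,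
      (shiftX d ⊗ₖ shiftX d).mulVec (antiV d x i) = antiV d x (i + 1) ∧
      ((clockZ d ^ ((d + 1) / 2)) ⊗ₖ (clockZ d ^ ((d + 1) / 2))).mulVec (antiV d x i)
        = omg d ^ i.val • antiV d x i) ∧
    -- each block is a d-dimensional subspace
    (∀ x : ℕ, x ≤ (d - 1) / 2 →
      Module.finrank ℂ (Submodule.span ℂ (Set.range fun i : ZMod d => symV d x i)) = d) ∧
    (∀ x : ℕ, 1 ≤ x → x ≤ (d - 1) / 2 →
      Module.finrank ℂ (Submodule.span ℂ (Set.range fun i : ZMod d => antiV d x i)) = d) := by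
  obtain ⟨k, hk⟩ := id hodd
  have hF : ∀ t t' : (Fin ((d - 1) / 2 + 1) × ZMod d) ⊕ (Fin ((d - 1) / 2) × ZMod d),
      cInner
        (Sum.elim (fun q => symV d q.1.val q.2) (fun q => antiV d (q.1.val + 1) q.2) t)
        (Sum.elim (fun q => symV d q.1.val q.2) (fun q => antiV d (q.1.val + 1) q.2) t')
      = if t = t' then 1 else 0 := by
    rintro (⟨x, i⟩ | ⟨x, i⟩) (⟨x', i'⟩ | ⟨x', i'⟩) <;>
      simp only [Sum.elim_inl, Sum.elim_inr]
    · rw [cInner_symV_symV hodd (by have := x.isLt; omega) (by have := x'.isLt; omega)]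
      simp [Prod.ext_iff, Fin.ext_iff]
    · rw [cInner_symV_antiV hodd]
      simp
    · rw [cInner_antiV_symV hodd]
      simp
    · rw [cInner_antiV_antiV hodd (by omega) (by have := x.isLt; omega) (by omega)
        (by have := x'.isLt; omega)]
      simp [Prod.ext_iff, Fin.ext_iff]
  refine ⟨hF, ?_, ?_, ?_, ?_, ?_⟩
  · haveI : Nonempty ((Fin ((d - 1) / 2 + 1) × ZMod d) ⊕ (Fin ((d - 1) / 2) × ZMod d)) :=
      ⟨Sum.inl (⟨0, Nat.succ_pos _⟩, 0)⟩
    apply LinearIndependent.span_eq_top_of_card_eq_finrank (li_of_orthonormal _ hF)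
    simp only [Fintype.card_sum, Fintype.card_prod, Fintype.card_fin, ZMod.card,
      Module.finrank_pi, Fintype.card_prod]
    have h1 : (d - 1) / 2 = k := by omega
    rw [h1, hk]
    ring
  · intro x hx i
    exact ⟨shift_symV x i, clock_symV hodd x i⟩
  · intro x hx1 hx i
    exact ⟨shift_antiV x i, clock_antiV hodd x i⟩
  · intro x hx
    have li := li_of_orthonormal (fun i : ZMod d => symV d x i)
      (fun i i' => by rw [cInner_symV_symV hodd (by omega) (by omega)]; simp)
    rw [finrank_span_eq_card li, ZMod.card]
  · intro x hx1 hx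
    have li := li_of_orthonormal (fun i : ZMod d => antiV d x i)
      (fun i i' => by
        rw [cInner_antiV_antiV hodd (by omega) (by omega) (by omega) (by omega)]; simp)
    rw [finrank_span_eq_card li, ZMod.card]
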